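/- Let I = (L^i(v)) ⊆ S = k[x_1,...,x_n] be an initial squarefree lexsegment ideal generated in degree q, determined by v = x_{j_1}···x_{j_q} with 2 ≤ j_1 < ... < j_q ≤ n. Then dim(S/I) = n - j_1. -/

import Mathlib

open MvPolynomial

variable {k : Type*} [Field k]

/-- The squarefree monomial `x_F = ∏_{i ∈ F} x_i`. -/
noncomputable def sqMon (n : ℕ) (k : Type*) [Field k] (F : Finset (Fin n)) :
    MvPolynomial (Fin n) k :=
  ∏ i ∈ F, X i

/-- `x_F >_lex x_G` for squarefree monomials: at the smallest index where the supports
differ, the index belongs to `F`. -/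
def sqGtLex {n : ℕ} (F G : Finset (Fin n)) : Prop :=
  ∃ a, a ∈ F ∧ a ∉ G ∧ ∀ b, b < a → (b ∈ F ↔ b ∈ G)

/-- `x_F ≥_lex x_G` for squarefree monomials. -/
def sqGeLex {n : ℕ} (F G : Finset (Fin n)) : Prop :=
  F = G ∨ sqGtLex F G

/-- The squarefree lexsegment set `L(u,v)` of degree `q` (as a set of supports). -/
def sqLexSeg {n : ℕ} (q : ℕ) (u v : Finset (Fin n)) : Set (Finset (Fin n)) :=
  {w | w.card = q ∧ sqGeLex u w ∧ sqGeLex w v}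

/-- The initial squarefree lexsegment set `L^i(v)` of degree `q`. -/
def sqLexSegInit {n : ℕ} (q : ℕ) (v : Finset (Fin n)) : Set (Finset (Fin n)) :=
  {w | w.card = q ∧ sqGeLex w v}

/-- The final squarefree lexsegment set `L^f(u)` of degree `q`. -/
def sqLexSegFinal {n : ℕ} (q : ℕ) (u : Finset (Fin n)) : Set (Finset (Fin n)) :=
  {w | w.card = q ∧ sqGeLex u w}

/-- The squarefree monomial ideal generated by a set of supports. -/
noncomputable def sqIdeal (n : ℕ) (k : Type*) [Field k] (L : Set (Finset (Fin n))) :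
    Ideal (MvPolynomial (Fin n) k) :=
  Ideal.span ((fun F => sqMon n k F) '' L)

/-- The monomial prime ideal `P_G` generated by the variables indexed by `G`. -/
noncomputable def varIdeal (n : ℕ) (k : Type*) [Field k] (G : Finset (Fin n)) :
    Ideal (MvPolynomial (Fin n) k) :=
  Ideal.span ((fun i => (X i : MvPolynomial (Fin n) k)) '' (G : Set (Fin n)))

/-- The depth of `S/I`: the supremum of lengths of regular sequences on `S/I`
contained in the graded maximal ideal `(x_1, ..., x_n)`. -/
noncomputable def depthQ {n : ℕ} {k : Type*} [Field k]
    (I : Ideal (MvPolynomial (Fin n) k)) : ℕ :=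
  sSup {r | ∃ rs : List (MvPolynomial (Fin n) k), rs.length = r ∧
    (∀ x ∈ rs, x ∈ Ideal.span (Set.range (X : Fin n → MvPolynomial (Fin n) k))) ∧
    RingTheory.Sequence.IsRegular (MvPolynomial (Fin n) k ⧸ I) rs}

/-- A face of the Stanley–Reisner complex of the squarefree monomial ideal `I`. -/
def isFace {n : ℕ} (k : Type*) [Field k] (I : Ideal (MvPolynomial (Fin n) k))
    (F : Finset (Fin n)) : Prop :=
  sqMon n k F ∉ I

/-- A facet (maximal face) of the Stanley–Reisner complex of `I`. -/
def isFacet {n : ℕ} (k : Type*) [Field k] (I : Ideal (MvPolynomial (Fin n) k))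
    (F : Finset (Fin n)) : Prop :=
  isFace k I F ∧ ∀ G, F ⊂ G → ¬ isFace k I G

section NestAux

variable {A : Type*} [CommRing A]

/-- Nested Coquand–Lombardi expression. -/
def nestVal : (t : ℕ) → (x : ℕ → A) → (m : ℕ → ℕ) → (a : ℕ → A) → A → A
  | 0, _, _, _, c => c
  | t + 1, x, m, a, c =>
      x 0 ^ m 0 *
        (nestVal t (fun i => x (i + 1)) (fun i => m (i + 1)) (fun i => a (i + 1)) c + a 0 * x 0)

lemma nest_kill : ∀ (t : ℕ) (p : ℕ → Ideal A), (∀ i ≤ t, (p i).IsPrime) →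
    (∀ i < t, p i ≤ p (i + 1)) →
    ∀ (x : ℕ → A) (m : ℕ → ℕ) (a : ℕ → A), (∀ i < t, x i ∈ p (i + 1) ∧ x i ∉ p i) →
    ∀ c : A, nestVal t x m a c ∈ p 0 → c ∈ p t
  | 0, _, _, _, _, _, _, _, _, h => h
  | t + 1, p, hp, hc, x, m, a, hx, c, h => by
    have hx0 := hx 0 (Nat.succ_pos t)
    have hp0 := hp 0 (Nat.zero_le _)
    have h1 : nestVal t (fun i => x (i + 1)) (fun i => m (i + 1)) (fun i => a (i + 1)) c
        + a 0 * x 0 ∈ p 0 := by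
      rcases hp0.mem_or_mem h with h' | h'
      · exact absurd (hp0.mem_of_pow_mem _ h') hx0.2
      · exact h'
    have h2 : nestVal t (fun i => x (i + 1)) (fun i => m (i + 1)) (fun i => a (i + 1)) c
        ∈ p 1 := by
      have := hc 0 (Nat.succ_pos t) h1
      have ha : a 0 * x 0 ∈ p 1 := Ideal.mul_mem_left _ _ hx0.1
      simpa using (Ideal.sub_mem _ this ha)
    exact nest_kill t (fun i => p (i + 1)) (fun i hi => hp _ (by omega))
      (fun i hi => hc _ (by omega)) _ _ _ (fun i hi => hx _ (by omega)) c h2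


variable {K : Type*} [Field K] [Algebra K A]

lemma aeval_finSuccEquiv' (t : ℕ) (x : ℕ → A) (Q : MvPolynomial (Fin (t + 1)) K) :
    Polynomial.eval₂ (↑(aeval (fun i : Fin t => x ((i : ℕ) + 1)) :
        MvPolynomial (Fin t) K →ₐ[K] A) : MvPolynomial (Fin t) K →+* A) (x 0)
      (finSuccEquiv K t Q) = aeval (fun i : Fin (t + 1) => x (i : ℕ)) Q := by
  have : (Polynomial.eval₂RingHom (↑(aeval (fun i : Fin t => x ((i : ℕ) + 1)) :
        MvPolynomial (Fin t) K →ₐ[K] A) : MvPolynomial (Fin t) K →+* A) (x 0)).comp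
      ((finSuccEquiv K t : MvPolynomial (Fin (t+1)) K ≃ₐ[K] _) :
        MvPolynomial (Fin (t+1)) K →+* Polynomial (MvPolynomial (Fin t) K)) =
      ↑(aeval (fun i : Fin (t + 1) => x (i : ℕ)) : MvPolynomial (Fin (t+1)) K →ₐ[K] A) := by
    apply MvPolynomial.ringHom_ext
    · intro r
      simp [finSuccEquiv_apply]
    · intro i
      refine Fin.cases ?_ ?_ i
      · simp [finSuccEquiv_X_zero]
      · intro k
        simp [finSuccEquiv_X_succ]
  have := DFunLike.congr_fun this Q
  simpa using this

lemma nest_factor : ∀ (t : ℕ) (x : ℕ → A) (Q : MvPolynomial (Fin t) K), Q ≠ 0 →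
    ∃ (m : ℕ → ℕ) (a : ℕ → A) (c : K), c ≠ 0 ∧
      aeval (fun i : Fin t => x (i : ℕ)) Q = nestVal t x m a (algebraMap K A c) := by
  intro t
  induction t with
  | zero =>
    intro x Q hQ
    obtain ⟨c, rfl⟩ := MvPolynomial.C_surjective (Fin 0) Q
    refine ⟨fun _ => 0, fun _ => 0, c, fun h => hQ (by rw [h, map_zero]), ?_⟩
    simp [nestVal]
  | succ t IH =>
    intro x Q hQ
    set P := finSuccEquiv K t Q with hP
    have hPne : P ≠ 0 := fun h => hQ ((map_eq_zero_iff _ (finSuccEquiv K t).injective).mp h)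
    set m0 := P.natTrailingDegree with hm0
    obtain ⟨S, hS⟩ : (Polynomial.X : Polynomial (MvPolynomial (Fin t) K)) ^ m0 ∣ P :=
      Polynomial.X_pow_dvd_iff.mpr fun d hd =>
        Polynomial.coeff_eq_zero_of_lt_natTrailingDegree hd
    have hSne : S ≠ 0 := fun h => hPne (by rw [hS, h, mul_zero])
    have hS0 : S.coeff 0 ≠ 0 := by
      have h1 : P.coeff m0 ≠ 0 := Polynomial.coeff_natTrailingDegree_ne_zero.mpr hPne
      have h2 : P.coeff m0 = S.coeff 0 := by
        rw [hS]
        simpa using Polynomial.coeff_X_pow_mul S m0 0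
      rwa [h2] at h1
    obtain ⟨m', a', c, hc, hIH⟩ := IH (fun i => x (i + 1)) (S.coeff 0) hS0
    set f : MvPolynomial (Fin t) K →+* A :=
      (↑(aeval (fun i : Fin t => x ((i : ℕ) + 1)) : MvPolynomial (Fin t) K →ₐ[K] A)) with hf
    set D := S.divX with hD
    set S0 := S.coeff 0 with hS0def
    refine ⟨fun i => match i with | 0 => m0 | i + 1 => m' i,
            fun i => match i with | 0 => Polynomial.eval₂ f (x 0) D | i + 1 => a' i,
            c, hc, ?_⟩
    have key := aeval_finSuccEquiv' t x Q
    rw [← key, ← hP, hS]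
    have hSdecomp : S = Polynomial.C S0 + Polynomial.X * D := by
      rw [hD, hS0def]
      conv_lhs => rw [← Polynomial.X_mul_divX_add S]
      ring
    rw [hSdecomp]
    rw [Polynomial.eval₂_mul, Polynomial.eval₂_pow, Polynomial.eval₂_X, Polynomial.eval₂_add,
      Polynomial.eval₂_C, Polynomial.eval₂_mul, Polynomial.eval₂_X]
    show _ = x 0 ^ m0 * (nestVal t (fun i => x (i+1)) (fun i => m' i) (fun i => a' i)
      (algebraMap K A c) + Polynomial.eval₂ f (x 0) D * x 0)
    have : f S0 = aeval (fun i : Fin t => x ((i : ℕ) + 1)) S0 := rfl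
    rw [this, hIH]
    ring


universe uK in
lemma not_algIndep (K : Type uK) [Field K] (n : ℕ)
    (x : Fin (n + 1) → MvPolynomial (Fin n) K) : ¬ AlgebraicIndependent K x := by
  intro h
  classical
  set d := Finset.univ.sup (fun i => (x i).totalDegree) with hd
  set N := ((n + 1) * d + 1) ^ n with hN
  set D := (n + 1) * d * N with hD
  have hinj : Function.Injective (aeval x : MvPolynomial (Fin (n+1)) K →ₐ[K] _) := h
  have li0 : LinearIndependent K
      (fun s : (Fin (n+1) →₀ ℕ) => (aeval x) (monomial s (1 : K))) := by
    have := (basisMonomials (Fin (n+1)) K).linearIndependent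
    have := this.map' (aeval x : MvPolynomial (Fin (n+1)) K →ₐ[K] _).toLinearMap
      (LinearMap.ker_eq_bot.mpr hinj)
    exact this
  set φ : (Fin (n+1) → Fin (N+1)) → (Fin (n+1) →₀ ℕ) :=
    fun g => Finsupp.equivFunOnFinite.symm (fun i => (g i : ℕ)) with hφ
  have hφapp : ∀ g i, φ g i = (g i : ℕ) := by intro g i; simp [φ, Finsupp.equivFunOnFinite]
  have hφinj : Function.Injective φ := by
    intro g g' hgg'
    funext i
    have := DFunLike.congr_fun hgg' i
    rw [hφapp, hφapp] at this
    exact Fin.val_injective this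
  have li : LinearIndependent K (fun g : (Fin (n+1) → Fin (N+1)) =>
      (aeval x) (monomial (φ g) (1 : K))) := li0.comp φ hφinj
  set W := restrictTotalDegree (Fin n) K D with hW
  have hmem : ∀ g : Fin (n+1) → Fin (N+1), (aeval x) (monomial (φ g) (1 : K)) ∈ W := by
    intro g
    rw [hW, mem_restrictTotalDegree]
    have heq : (aeval x) (monomial (φ g) (1 : K)) = ∏ i : Fin (n+1), (x i) ^ ((g i : ℕ)) := by
      rw [aeval_monomial, map_one, one_mul, Finsupp.prod_fintype]
      · exact Finset.prod_congr rfl fun i _ => by rw [hφapp]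
      · intro i; exact pow_zero _
    rw [heq]
    calc (∏ i : Fin (n+1), (x i) ^ ((g i : ℕ))).totalDegree
        ≤ ∑ i : Fin (n+1), ((x i) ^ ((g i : ℕ))).totalDegree :=
          totalDegree_finset_prod _ _
      _ ≤ ∑ _i : Fin (n+1), N * d := by
          refine Finset.sum_le_sum fun i _ => ?_
          calc ((x i) ^ ((g i : ℕ))).totalDegree ≤ (g i : ℕ) * (x i).totalDegree :=
                totalDegree_pow _ _
            _ ≤ N * d := Nat.mul_le_mul (by omega)
                (hd ▸ Finset.le_sup (f := fun i => (x i).totalDegree) (Finset.mem_univ i))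
      _ = (n + 1) * (N * d) := by simp [Finset.sum_const, Finset.card_univ, mul_comm]
      _ = D := by rw [hD]; ring
  have li' : LinearIndependent K (fun g : (Fin (n+1) → Fin (N+1)) =>
      (⟨(aeval x) (monomial (φ g) (1 : K)), hmem g⟩ : W)) := by
    apply LinearIndependent.of_comp W.subtype
    exact li
  have c1 : Cardinal.lift.{uK} (Cardinal.mk (Fin (n+1) → Fin (N+1))) ≤
      Cardinal.lift.{0} (Module.rank K W) :=
    li'.cardinal_lift_le_rank
  have c2 : Cardinal.lift.{uK}
      (Cardinal.mk { s : Fin n →₀ ℕ // (s.sum fun _ e => e) ≤ D }) =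
      Cardinal.lift.{0} (Module.rank K W) :=
    (basisRestrictSupport K { s : Fin n →₀ ℕ | (s.sum fun _ e => e) ≤ D }).mk_eq_rank
  have hle : ∀ (s : Fin n →₀ ℕ) (i : Fin n), s i ≤ s.sum fun _ e => e := by
    intro s i
    by_cases hi : i ∈ s.support
    · exact Finset.single_le_sum (fun _ _ => Nat.zero_le _) hi
    · simp [Finsupp.notMem_support_iff.mp hi]
  have c3 : Cardinal.mk { s : Fin n →₀ ℕ // (s.sum fun _ e => e) ≤ D } ≤
      Cardinal.mk (Fin n → Fin (D+1)) := by
    refine Cardinal.mk_le_of_injective (f := fun s => fun i =>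
      (⟨s.1 i, by have := hle s.1 i; have := s.2; omega⟩ : Fin (D+1))) ?_
    intro s s' hss'
    ext i
    exact congrArg Fin.val (congrFun hss' i)
  have cfin1 : Cardinal.mk (Fin (n+1) → Fin (N+1)) = ((N+1)^(n+1) : ℕ) := by
    simp [Cardinal.mk_fintype]
  have cfin2 : Cardinal.mk (Fin n → Fin (D+1)) = ((D+1)^n : ℕ) := by
    simp [Cardinal.mk_fintype]
  have main : ((N+1)^(n+1) : ℕ) ≤ ((D+1)^n : ℕ) := by
    have := (c1.trans c2.ge).trans (Cardinal.lift_le.mpr c3)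
    rw [cfin1, cfin2, Cardinal.lift_le] at this
    exact_mod_cast this
  -- arithmetic contradiction
  have h1 : D + 1 ≤ ((n+1)*d + 1) * (N+1) := by
    rw [hD]; nlinarith [Nat.zero_le N, Nat.zero_le ((n+1)*d)]
  have h2 : ((D+1)^n : ℕ) ≤ N * (N+1)^n := by
    calc (D+1)^n ≤ (((n+1)*d + 1) * (N+1))^n := Nat.pow_le_pow_left h1 n
      _ = ((n+1)*d + 1)^n * (N+1)^n := mul_pow _ _ _
      _ = N * (N+1)^n := by rw [hN]
  have h3 : (N+1)^(n+1) = (N+1) * (N+1)^n := by ring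
  have hpos : 0 < (N+1)^n := Nat.pow_pos (Nat.succ_pos N)
  have h4 : (N+1) * (N+1)^n = N * (N+1)^n + (N+1)^n := by ring
  omega


lemma chain_bound {K : Type*} [Field K] {n L : ℕ}
    (r : ℕ → Ideal (MvPolynomial (Fin n) K))
    (hprime : ∀ i ≤ L, (r i).IsPrime) (hlt : ∀ i < L, r i < r (i + 1)) : L ≤ n := by
  by_contra hL
  push_neg at hL
  have hx' : ∀ i, ∃ y : MvPolynomial (Fin n) K, i < L → (y ∈ r (i + 1) ∧ y ∉ r i) := by
    intro i
    by_cases hi : i < L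
    · obtain ⟨y, h1, h2⟩ := SetLike.exists_of_lt (hlt i hi)
      exact ⟨y, fun _ => ⟨h1, h2⟩⟩
    · exact ⟨0, fun h => absurd h hi⟩
  choose x hx using hx'
  have hdep := not_algIndep K n (fun i : Fin (n + 1) => x i)
  rw [AlgebraicIndependent] at hdep
  rw [Function.not_injective_iff] at hdep
  obtain ⟨p, q, hpq, hne⟩ := hdep
  have hQne : p - q ≠ 0 := sub_ne_zero.mpr hne
  obtain ⟨m, a, c, hc, hfac⟩ := nest_factor (n + 1) x (p - q) hQne
  have hzero : nestVal (n + 1) x m a (algebraMap K _ c) ∈ r 0 := by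
    rw [← hfac, map_sub, hpq, sub_self]
    exact (r 0).zero_mem
  have hmem : algebraMap K (MvPolynomial (Fin n) K) c ∈ r (n + 1) :=
    nest_kill (n + 1) r (fun i hi => hprime i (by omega)) (fun i hi => (hlt i (by omega)).le)
      x m a (fun i hi => hx i (by omega)) _ hzero
  have hunit : IsUnit (algebraMap K (MvPolynomial (Fin n) K) c) :=
    (isUnit_iff_ne_zero.mpr hc).map _
  exact (hprime (n + 1) (by omega)).ne_top (Ideal.eq_top_of_isUnit_mem _ hmem hunit)


end NestAux

section VarIdealAux

variable {n : ℕ}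



lemma X_mem_varIdeal {G : Finset (Fin n)} {i : Fin n} (h : i ∈ G) :
    (X i : MvPolynomial (Fin n) k) ∈ varIdeal n k G :=
  Ideal.subset_span ⟨i, by simpa using h, rfl⟩

lemma X_not_mem_varIdeal {G : Finset (Fin n)} {i : Fin n} (h : i ∉ G) :
    (X i : MvPolynomial (Fin n) k) ∉ varIdeal n k G := by
  intro hmem
  rw [varIdeal, mem_ideal_span_X_image] at hmem
  obtain ⟨i', hi', hne⟩ := hmem (Finsupp.single i 1) (by simp [support_X])
  rw [Finsupp.single_apply_ne_zero] at hne
  exact h (by simpa [hne.1] using hi')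

lemma varIdeal_mono {G G' : Finset (Fin n)} (h : G ⊆ G') :
    varIdeal n k G ≤ varIdeal n k G' :=
  Ideal.span_mono (Set.image_mono (by exact_mod_cast h))

lemma varIdeal_isPrime (G : Finset (Fin n)) : (varIdeal n k G).IsPrime := by
  classical
  set φ : MvPolynomial (Fin n) k →ₐ[k] MvPolynomial (Fin n) k :=
    aeval (fun i => if i ∈ G then 0 else X i) with hφ
  have hker : varIdeal n k G = RingHom.ker (φ : MvPolynomial (Fin n) k →+* MvPolynomial (Fin n) k) := by
    apply le_antisymm
    · rw [varIdeal, Ideal.span_le]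
      rintro _ ⟨i, hi, rfl⟩
      simp only [SetLike.mem_coe, RingHom.mem_ker, RingHom.coe_coe, hφ, aeval_X]
      rw [if_pos (by simpa using hi)]
    · intro p hp
      rw [RingHom.mem_ker] at hp
      have key : ∀ p : MvPolynomial (Fin n) k, p - φ p ∈ varIdeal n k G := by
        intro p
        induction p using MvPolynomial.induction_on with
        | C a => simp [hφ]
        | add p q hp hq =>
          have : p + q - φ (p + q) = (p - φ p) + (q - φ q) := by rw [map_add]; ring
          rw [this]; exact Ideal.add_mem _ hp hq
        | mul_X p i hp =>
          rw [map_mul]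
          by_cases hiG : i ∈ G
          · have hX0 : φ (X i) = 0 := by simp [hφ, hiG]
            rw [hX0, mul_zero, sub_zero]
            exact Ideal.mul_mem_left _ _ (X_mem_varIdeal hiG)
          · have hX : φ (X i) = X i := by simp [hφ, hiG]
            rw [hX]
            have : p * X i - φ p * X i = (p - φ p) * X i := by ring
            rw [this]
            exact Ideal.mul_mem_right _ _ hp
      have hp' : φ p = 0 := hp
      have := key p
      rwa [hp', sub_zero] at this
  rw [hker]
  exact RingHom.ker_isPrime _


end VarIdealAux

section Comb

variable {n q : ℕ}

lemma v_card (j : Fin q → Fin n) (hmono : StrictMono j) : (Finset.image j Finset.univ).card = q := by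
  rw [Finset.card_image_of_injective _ hmono.injective, Finset.card_univ, Fintype.card_fin]

lemma v_min (hq : 0 < q) (j : Fin q → Fin n) (hmono : StrictMono j) (i : Fin n) (hi : i ∈ Finset.image j Finset.univ) : j ⟨0, hq⟩ ≤ i := by
  obtain ⟨m, _, rfl⟩ := Finset.mem_image.mp hi
  exact hmono.monotone (Fin.mk_le_of_le_val (Nat.zero_le _))

lemma v_mem_seg (j : Fin q → Fin n) (hmono : StrictMono j) : (Finset.image j Finset.univ) ∈
    sqLexSegInit q (Finset.image j Finset.univ) :=
  ⟨v_card j hmono, Or.inl rfl⟩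

/-- Any `q`-set containing an element strictly below `j 0` is in the initial segment. -/
lemma low_mem_seg (hq : 0 < q) (j : Fin q → Fin n) (hmono : StrictMono j) (w : Finset (Fin n)) (hw : w.card = q) (a : Fin n) (haw : a ∈ w)
    (ha : a < j ⟨0, hq⟩) : w ∈ sqLexSegInit q (Finset.image j Finset.univ) := by
  classical
  refine ⟨hw, Or.inr ?_⟩
  set v := Finset.image j Finset.univ with hv
  have hav : a ∉ v := fun h => absurd (v_min hq j hmono a h) (not_le.mpr ha)
  set sd := (w \ v) ∪ (v \ w) with hsd
  have hne : sd.Nonempty := ⟨a, by simp [hsd, haw, hav]⟩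
  set d := sd.min' hne with hd
  have hdmem : d ∈ sd := sd.min'_mem hne
  have hda : d ≤ a := sd.min'_le a (by simp [hsd, haw, hav])
  have hdw : d ∈ w \ v := by
    rcases Finset.mem_union.mp hdmem with h | h
    · exact h
    · exact absurd (v_min hq j hmono d (Finset.mem_sdiff.mp h).1)
        (not_le.mpr (lt_of_le_of_lt hda ha))
  refine ⟨d, (Finset.mem_sdiff.mp hdw).1, (Finset.mem_sdiff.mp hdw).2, fun b hb => ?_⟩
  have hbsd : b ∉ sd := fun h => absurd (sd.min'_le b h) (not_le.mpr hb)
  rw [hsd, Finset.mem_union, Finset.mem_sdiff, Finset.mem_sdiff] at hbsd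
  push_neg at hbsd
  exact ⟨hbsd.1, hbsd.2⟩

lemma seg_hits_low (hq : 0 < q) (j : Fin q → Fin n) (hmono : StrictMono j)
    (w : Finset (Fin n)) (hw : w ∈ sqLexSegInit q (Finset.image j Finset.univ)) :
    ∃ i ∈ w, i ≤ j ⟨0, hq⟩ := by
  obtain ⟨hcard, hge⟩ := hw
  rcases hge with rfl | ⟨a, haw, hav, hagree⟩
  · exact ⟨j ⟨0, hq⟩, Finset.mem_image.mpr ⟨⟨0, hq⟩, Finset.mem_univ _, rfl⟩, le_refl _⟩
  · rcases le_or_gt a (j ⟨0, hq⟩) with h | h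
    · exact ⟨a, haw, h⟩
    · refine ⟨j ⟨0, hq⟩, ?_, le_refl _⟩
      exact (hagree _ h).mpr (Finset.mem_image.mpr ⟨⟨0, hq⟩, Finset.mem_univ _, rfl⟩)

lemma q_le_sub (hq : 0 < q) (j : Fin q → Fin n) (hmono : StrictMono j) :
    q ≤ n - (j ⟨0, hq⟩ : ℕ) := by
  classical
  have hsub : Finset.image j Finset.univ ⊆ Finset.Ici (j ⟨0, hq⟩) := by
    intro i hi
    exact Finset.mem_Ici.mpr (v_min hq j hmono i hi)
  have := Finset.card_le_card hsub
  rw [v_card j hmono, Fin.card_Ici] at this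
  exact this


lemma sqMon_mem_sqIdeal {L : Set (Finset (Fin n))} {w : Finset (Fin n)} (hw : w ∈ L) :
    sqMon n k w ∈ sqIdeal n k L :=
  Ideal.subset_span ⟨w, hw, rfl⟩

lemma exists_X_mem_of_sqMon_mem {P : Ideal (MvPolynomial (Fin n) k)} (hP : P.IsPrime)
    {w : Finset (Fin n)} (h : sqMon n k w ∈ P) : ∃ i ∈ w, (X i : MvPolynomial (Fin n) k) ∈ P := by
  rw [sqMon, Ideal.IsPrime.prod_mem_iff] at h
  exact h

lemma sqIdeal_le_varIdeal_Iic (hq : 0 < q) (j : Fin q → Fin n) (hmono : StrictMono j) :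
    sqIdeal n k (sqLexSegInit q (Finset.image j Finset.univ)) ≤
      varIdeal n k (Finset.Iic (j ⟨0, hq⟩)) := by
  rw [sqIdeal, Ideal.span_le]
  rintro _ ⟨w, hw, rfl⟩
  obtain ⟨i, hiw, hile⟩ := seg_hits_low hq j hmono w hw
  show sqMon n k w ∈ varIdeal n k (Finset.Iic (j ⟨0, hq⟩))
  rw [sqMon, ← Finset.mul_prod_erase w _ hiw]
  exact Ideal.mul_mem_right _ _ (X_mem_varIdeal (Finset.mem_Iic.mpr hile))

lemma transversal (hq : 0 < q) (j : Fin q → Fin n) (hmono : StrictMono j)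
    (P : Ideal (MvPolynomial (Fin n) k))
    [DecidablePred fun i : Fin n => (X i : MvPolynomial (Fin n) k) ∈ P] (hP : P.IsPrime)
    (hIP : sqIdeal n k (sqLexSegInit q (Finset.image j Finset.univ)) ≤ P) :
    (j ⟨0, hq⟩ : ℕ) + 1 ≤ (Finset.univ.filter
      (fun i : Fin n => (X i : MvPolynomial (Fin n) k) ∈ P)).card := by
  classical
  set j1 := j ⟨0, hq⟩ with hj1
  set T := Finset.univ.filter (fun i : Fin n => (X i : MvPolynomial (Fin n) k) ∈ P) with hT
  by_contra hcard
  push_neg at hcard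
  have hcard' : T.card ≤ (j1 : ℕ) := by omega
  by_cases hlow : ∃ a : Fin n, a < j1 ∧ a ∉ T
  · obtain ⟨a, haj, haT⟩ := hlow
    -- build a q-subset of Tᶜ containing a
    have hTc : q - 1 ≤ ((Finset.univ \ T).erase a).card := by
      have h1 : (Finset.univ \ T).card = n - T.card := by
        rw [Finset.card_sdiff_of_subset (Finset.subset_univ T), Finset.card_univ, Fintype.card_fin]
      have h2 : a ∈ Finset.univ \ T := Finset.mem_sdiff.mpr ⟨Finset.mem_univ _, haT⟩
      rw [Finset.card_erase_of_mem h2, h1]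
      have hq' := q_le_sub hq j hmono
      have hj1n : (j1 : ℕ) < n := j1.isLt
      omega
    obtain ⟨B, hBsub, hBcard⟩ := Finset.exists_subset_card_eq hTc
    set w := insert a B with hw
    have haB : a ∉ B := fun h => (Finset.notMem_erase a _) (hBsub h)
    have hwcard : w.card = q := by
      rw [hw, Finset.card_insert_of_notMem haB, hBcard]
      omega
    have hwseg := low_mem_seg hq j hmono w hwcard a (Finset.mem_insert_self a B) haj
    obtain ⟨i, hiw, hiP⟩ := exists_X_mem_of_sqMon_mem hP (hIP (sqMon_mem_sqIdeal hwseg))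
    have hiT : i ∈ T := Finset.mem_filter.mpr ⟨Finset.mem_univ _, hiP⟩
    rcases Finset.mem_insert.mp hiw with rfl | hiB
    · exact haT hiT
    · exact (Finset.mem_sdiff.mp (Finset.mem_of_mem_erase (hBsub hiB))).2 hiT
  · push_neg at hlow
    have hsub : Finset.Iio j1 ⊆ T := fun a ha => hlow a (Finset.mem_Iio.mp ha)
    have hTeq : T = Finset.Iio j1 := by
      apply (Finset.eq_of_subset_of_card_le hsub ?_).symm
      rw [Fin.card_Iio]
      exact hcard'
    obtain ⟨i, hiv, hiP⟩ := exists_X_mem_of_sqMon_mem hP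
      (hIP (sqMon_mem_sqIdeal (v_mem_seg j hmono)))
    have hiT : i ∈ T := Finset.mem_filter.mpr ⟨Finset.mem_univ _, hiP⟩
    rw [hTeq, Finset.mem_Iio] at hiT
    exact absurd (v_min hq j hmono i hiv) (not_le.mpr hiT)


section UpperAux

variable {n q : ℕ}

lemma upper_chain (hq : 0 < q) (j : Fin q → Fin n) (hmono : StrictMono j) (N : ℕ)
    (pp : ℕ → Ideal (MvPolynomial (Fin n) k ⧸
      sqIdeal n k (sqLexSegInit q (Finset.image j Finset.univ))))
    (hppr : ∀ s, (pp s).IsPrime) (hpplt : ∀ s < N, pp s < pp (s + 1)) :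
    N ≤ n - ((j ⟨0, hq⟩ : ℕ) + 1) := by
  classical
  set mk := Ideal.Quotient.mk (sqIdeal n k (sqLexSegInit q (Finset.image j Finset.univ)))
    with hmk
  set J := (j ⟨0, hq⟩ : ℕ) with hJ
  -- primes in the polynomial ring
  set P : ℕ → Ideal (MvPolynomial (Fin n) k) := fun s => (pp s).comap mk with hP
  have hPprime : ∀ s, (P s).IsPrime := fun s => haveI := hppr s; Ideal.IsPrime.comap mk (K := pp s)
  have hPlt : ∀ s < N, P s < P (s + 1) := by
    intro s hs
    have h1 := hpplt s hs
    have hle : P s ≤ P (s + 1) := Ideal.comap_mono (le_of_lt h1)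
    refine lt_of_le_of_ne hle fun heq => ?_
    have := congrArg (Ideal.map mk) heq
    rw [hP] at this
    simp only [Ideal.map_comap_of_surjective mk Ideal.Quotient.mk_surjective] at this
    exact absurd this (ne_of_lt h1)
  have hIP0 : sqIdeal n k (sqLexSegInit q (Finset.image j Finset.univ)) ≤ P 0 := by
    intro y hy
    simp only [hP, Ideal.mem_comap]
    have : mk y = 0 := by
      rw [hmk]
      rwa [Ideal.Quotient.eq_zero_iff_mem]
    rw [this]
    exact Submodule.zero_mem _
  -- the variables contained in P 0
  set T := Finset.univ.filter
    (fun i : Fin n => (X i : MvPolynomial (Fin n) k) ∈ P 0) with hT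
  have hTcard : J + 1 ≤ T.card := transversal hq j hmono (P 0) (hPprime 0) hIP0
  obtain ⟨T', hT'sub, hT'card⟩ := Finset.exists_subset_card_eq hTcard
  set e := T'.orderIsoOfFin hT'card with he
  set t : Fin (J + 1) → Fin n := fun m => (e m : Fin n) with ht
  have htmono : StrictMono t := fun a b hab => by
    exact_mod_cast e.strictMono hab
  have htT : ∀ m, t m ∈ T := fun m => hT'sub (e m).2
  set Sset : ℕ → Finset (Fin n) :=
    fun i => (Finset.univ.filter (fun m : Fin (J + 1) => (m : ℕ) < i)).image t with hSset
  have htnotmem : ∀ (m : Fin (J + 1)) (i : ℕ), (m : ℕ) = i → t m ∉ Sset i := by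
    rintro m i rfl hmem
    obtain ⟨m', hm', heq⟩ := Finset.mem_image.mp hmem
    rw [Finset.mem_filter] at hm'
    have := htmono.injective heq
    omega
  have htmem : ∀ (m : Fin (J + 1)) (i : ℕ), (m : ℕ) < i → t m ∈ Sset i := by
    intro m i hmi
    exact Finset.mem_image.mpr ⟨m, Finset.mem_filter.mpr ⟨Finset.mem_univ _, hmi⟩, rfl⟩
  -- the combined chain
  set r : ℕ → Ideal (MvPolynomial (Fin n) k) :=
    fun i => if i ≤ J then varIdeal n k (Sset i) else P (i - (J + 1)) with hr
  have hrprime : ∀ i ≤ J + 1 + N, (r i).IsPrime := by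
    intro i _
    simp only [hr]
    by_cases h : i ≤ J
    · rw [if_pos h]; exact varIdeal_isPrime _
    · rw [if_neg h]; exact hPprime _
  have hrlt : ∀ i < J + 1 + N, r i < r (i + 1) := by
    intro i hi
    rcases lt_trichotomy i J with h | h | h
    · -- both varIdeals
      simp only [hr, if_pos h.le, if_pos (by omega : i + 1 ≤ J)]
      refine lt_of_le_of_ne (varIdeal_mono ?_) fun heq => ?_
      · intro a ha
        obtain ⟨m', hm', rfl⟩ := Finset.mem_image.mp ha
        rw [Finset.mem_filter] at hm'
        exact htmem _ _ (by omega)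
      · have hXin : (X (t ⟨i, by omega⟩) : MvPolynomial (Fin n) k) ∈ varIdeal n k (Sset (i+1)) :=
          X_mem_varIdeal (htmem ⟨i, by omega⟩ (i+1) (by simp))
        rw [← heq] at hXin
        exact X_not_mem_varIdeal (htnotmem ⟨i, by omega⟩ i rfl) hXin
    · -- junction
      simp only [hr, if_pos h.le, if_neg (by omega : ¬ i + 1 ≤ J),
        (by omega : i + 1 - (J + 1) = 0)]
      refine lt_of_le_of_ne ?_ fun heq => ?_
      · rw [varIdeal, Ideal.span_le]
        rintro _ ⟨a, ha, rfl⟩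
        obtain ⟨m', _, rfl⟩ := Finset.mem_image.mp (by exact_mod_cast ha)
        exact (Finset.mem_filter.mp (htT m')).2
      · have hXin : (X (t ⟨i, by omega⟩) : MvPolynomial (Fin n) k) ∈ P 0 :=
          (Finset.mem_filter.mp (htT ⟨i, by omega⟩)).2
        rw [← heq] at hXin
        exact X_not_mem_varIdeal (htnotmem ⟨i, by omega⟩ i rfl) hXin
    · -- both quotient primes
      simp only [hr, if_neg (by omega : ¬ i ≤ J), if_neg (by omega : ¬ i + 1 ≤ J),
        (by omega : i + 1 - (J + 1) = (i - (J + 1)) + 1)]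
      exact hPlt _ (by omega)
  have := chain_bound r hrprime hrlt
  have hJn : J < n := (j ⟨0, hq⟩).isLt
  omega


end UpperAux

/-- for the initial squarefree lexsegment ideal `I = (L^i(v))` in
`S = k[x_1, ..., x_n]` determined by `v = x_{j_1} ⋯ x_{j_q}` with
`2 ≤ j_1 < ... < j_q ≤ n`, one has `dim(S/I) = n - j_1`.  Variables are indexed
`0, ..., n-1`, so `j_1` (1-based) equals `(j 0 : ℕ) + 1` and `n - j_1 = n - 1 - j 0`. -/
theorem stmt11 {k : Type*} [Field k] (n q : ℕ) (hq : 0 < q) (j : Fin q → Fin n)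
    (hmono : StrictMono j) (hj1 : 1 ≤ ((j ⟨0, hq⟩ : Fin n) : ℕ)) :
    ringKrullDim (MvPolynomial (Fin n) k ⧸
        sqIdeal n k (sqLexSegInit q (Finset.image j Finset.univ))) =
      ((n - (((j ⟨0, hq⟩ : Fin n) : ℕ) + 1) : ℕ) : WithBot (WithTop ℕ)) := by
  classical
  set J := ((j ⟨0, hq⟩ : Fin n) : ℕ) with hJ
  have hJn : J < n := (j ⟨0, hq⟩).isLt
  set I := sqIdeal n k (sqLexSegInit q (Finset.image j Finset.univ)) with hI
  set mk := Ideal.Quotient.mk I with hmk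
  rw [ringKrullDim]
  apply le_antisymm
  · -- upper bound
    rw [Order.krullDim]
    apply iSup_le
    intro p
    have key : p.length ≤ n - (J + 1) := by
      apply upper_chain hq j hmono p.length
        (fun s => (p ⟨min s p.length, by omega⟩).asIdeal)
      · exact fun s => (p ⟨min s p.length, by omega⟩).2
      · intro s hs
        have : p ⟨min s p.length, by omega⟩ < p ⟨min (s+1) p.length, by omega⟩ := by
          apply p.strictMono
          simp only [Fin.mk_lt_mk]
          omega
        exact this
    exact Nat.cast_le.mpr key
  · -- lower bound
    set len := n - (J + 1) with hlen
    set U : ℕ → Finset (Fin n) :=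
      fun s => Finset.univ.filter (fun i : Fin n => (i : ℕ) < J + 1 + s) with hU
    have hIU : ∀ s, I ≤ varIdeal n k (U s) := by
      intro s
      refine le_trans (sqIdeal_le_varIdeal_Iic hq j hmono) (varIdeal_mono ?_)
      intro i hi
      rw [Finset.mem_Iic] at hi
      have : (i : ℕ) ≤ J := hi
      exact Finset.mem_filter.mpr ⟨Finset.mem_univ _, by omega⟩
    have hker : ∀ s, RingHom.ker mk ≤ varIdeal n k (U s) := by
      intro s
      rw [hmk, Ideal.mk_ker]
      exact hIU s
    have hmapprime : ∀ s : ℕ, ((varIdeal n k (U s)).map mk).IsPrime := fun s =>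
      haveI := varIdeal_isPrime (k := k) (U s)
      Ideal.map_isPrime_of_surjective Ideal.Quotient.mk_surjective (hker s)
    set f : Fin (len + 1) → PrimeSpectrum (MvPolynomial (Fin n) k ⧸ I) :=
      fun s => ⟨(varIdeal n k (U (s : ℕ))).map mk, hmapprime _⟩ with hf
    have hfmono : StrictMono f := by
      intro s s' hss'
      have hs'len : (s' : ℕ) ≤ len := by omega
      have hsn : J + 1 + (s : ℕ) < n := by omega
      set i0 : Fin n := ⟨J + 1 + (s : ℕ), hsn⟩ with hi0
      have hUsub : U (s : ℕ) ⊆ U (s' : ℕ) := by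
        intro i hi
        rw [Finset.mem_filter] at hi ⊢
        refine ⟨hi.1, by have := hi.2; have : (s:ℕ) < s' := hss'; omega⟩
      have hi0mem : i0 ∈ U (s' : ℕ) := by
        rw [Finset.mem_filter]
        exact ⟨Finset.mem_univ _, by have : (s:ℕ) < s' := hss'; simp [hi0]; omega⟩
      have hi0not : i0 ∉ U (s : ℕ) := by
        rw [Finset.mem_filter]
        push_neg
        intro _
        simp [hi0]
      have hvlt : varIdeal n k (U (s : ℕ)) < varIdeal n k (U (s' : ℕ)) := by
        refine lt_of_le_of_ne (varIdeal_mono hUsub) fun heq => ?_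
        have := X_mem_varIdeal (k := k) hi0mem
        rw [← heq] at this
        exact X_not_mem_varIdeal hi0not this
      show f s < f s'
      rw [hf]
      have hle : (varIdeal n k (U (s : ℕ))).map mk ≤ (varIdeal n k (U (s' : ℕ))).map mk :=
        Ideal.map_mono hvlt.le
      refine lt_of_le_of_ne hle fun heq => ?_
      have heq' : ((varIdeal n k (U (s : ℕ))).map mk : Ideal _) =
          (varIdeal n k (U (s' : ℕ))).map mk := congrArg PrimeSpectrum.asIdeal heq
      have hc := congrArg (Ideal.comap mk) heq'
      rw [Ideal.comap_map_of_surjective mk Ideal.Quotient.mk_surjective,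
        Ideal.comap_map_of_surjective mk Ideal.Quotient.mk_surjective] at hc
      have hsup : ∀ s'' : ℕ, varIdeal n k (U s'') ⊔ Ideal.comap mk ⊥ = varIdeal n k (U s'') := by
        intro s''
        apply sup_eq_left.mpr
        intro y hy
        rw [Ideal.mem_comap] at hy
        have : y ∈ RingHom.ker mk := hy
        exact hker s'' this
      rw [hsup, hsup] at hc
      exact absurd hc (ne_of_lt hvlt)
    set p : LTSeries (PrimeSpectrum (MvPolynomial (Fin n) k ⧸ I)) :=
      ⟨len, f, fun i => hfmono (Fin.castSucc_lt_succ (i := i))⟩ with hp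
    have := Order.LTSeries.length_le_krullDim p
    have hplen : p.length = len := rfl
    rw [hplen] at this
    exact_mod_cast this
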